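/- arXiv:2209.01813 — 4 statements merged into one kernel-verified Lean document; each statement's English description precedes it below -/
import Mathlib

section
/- Let m ≥ 1 and let F_i, F_j ∈ ℝ^{m×2} be real matrices. Write F_iᵀF_j = [[a, b], [c, d]]. Then the infimum over all rotation matrices Q ∈ SO(2) of ‖F_j Q − F_i‖_F² equals tr(F_i F_iᵀ) + tr(F_j F_jᵀ) − 2·√((a + d)² + (c − b)²), and this infimum is attained. -/
open Matrix

/-- The Frobenius norm of a real matrix. -/
noncomputable def frobNorm {m n : ℕ} (A : Matrix (Fin m) (Fin n) ℝ) : ℝ :=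
  Real.sqrt (Matrix.trace (Aᵀ * A))

lemma trace_transpose_mul_self_nonneg' {m n : ℕ} (A : Matrix (Fin m) (Fin n) ℝ) :
    0 ≤ Matrix.trace (Aᵀ * A) := by
  simp only [Matrix.trace, Matrix.diag, Matrix.mul_apply, Matrix.transpose_apply]
  exact Finset.sum_nonneg fun j _ => Finset.sum_nonneg fun i _ => mul_self_nonneg _

lemma expand_trace {m : ℕ} (Fi Fj : Matrix (Fin m) (Fin 2) ℝ) (Q : Matrix (Fin 2) (Fin 2) ℝ)
    (hQ : Qᵀ * Q = 1) :
    Matrix.trace ((Fj * Q - Fi)ᵀ * (Fj * Q - Fi))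
      = Matrix.trace (Fi * Fiᵀ) + Matrix.trace (Fj * Fjᵀ)
        - 2 * Matrix.trace (Fiᵀ * Fj * Q) := by
  have hQQ : Q * Qᵀ = 1 := mul_eq_one_comm.mp hQ
  have h1 : Matrix.trace (Qᵀ * Fjᵀ * (Fj * Q)) = Matrix.trace (Fj * Fjᵀ) := by
    rw [Matrix.trace_mul_comm]
    rw [show Fj * Q * (Qᵀ * Fjᵀ) = Fj * (Q * Qᵀ) * Fjᵀ by simp [Matrix.mul_assoc], hQQ,
      Matrix.mul_one]
  have h2 : Matrix.trace (Qᵀ * Fjᵀ * Fi) = Matrix.trace (Fiᵀ * Fj * Q) := by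
    rw [← Matrix.trace_transpose (Qᵀ * Fjᵀ * Fi)]
    simp [Matrix.transpose_mul, Matrix.mul_assoc]
  have h3 : Matrix.trace (Fiᵀ * Fi) = Matrix.trace (Fi * Fiᵀ) := Matrix.trace_mul_comm _ _
  have h4 : Matrix.trace (Fiᵀ * (Fj * Q)) = Matrix.trace (Fiᵀ * Fj * Q) := by
    rw [Matrix.mul_assoc]
  rw [Matrix.transpose_sub, Matrix.transpose_mul, Matrix.sub_mul, Matrix.mul_sub,
    Matrix.mul_sub, Matrix.trace_sub, Matrix.trace_sub, Matrix.trace_sub, h1, h3, h4, h2]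
  ring

lemma so2_entries (Q : Matrix (Fin 2) (Fin 2) ℝ) (hQ : Qᵀ * Q = 1) (hd : Q.det = 1) :
    Q 1 1 = Q 0 0 ∧ Q 0 1 = -(Q 1 0) ∧ Q 0 0 ^ 2 + Q 1 0 ^ 2 = 1 := by
  have h00 := congrFun (congrFun hQ 0) 0
  have h01 := congrFun (congrFun hQ 0) 1
  have h11 := congrFun (congrFun hQ 1) 1
  simp [Matrix.mul_apply, Fin.sum_univ_two, Matrix.transpose_apply, Matrix.one_apply] at h00 h01 h11
  rw [Matrix.det_fin_two] at hd
  set p := Q 0 0; set q := Q 1 0; set s := Q 0 1; set t := Q 1 1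
  have ht : t = p := by nlinarith [sq_nonneg (t - p), sq_nonneg (s + q)]
  have hs : s = -q := by nlinarith [sq_nonneg (t - p), sq_nonneg (s + q)]
  exact ⟨ht, hs, by nlinarith⟩

lemma rot_orth (p q : ℝ) (h : p ^ 2 + q ^ 2 = 1) :
    (!![p, -q; q, p])ᵀ * !![p, -q; q, p] = 1 := by
  ext i j
  fin_cases i <;> fin_cases j <;>
    simp [Matrix.mul_apply, Fin.sum_univ_two, Matrix.one_apply, Matrix.transpose_apply,
      Matrix.vecHead, Matrix.vecTail] <;> nlinarith

lemma rot_det (p q : ℝ) (h : p ^ 2 + q ^ 2 = 1) : (!![p, -q; q, p]).det = 1 := by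
  rw [Matrix.det_fin_two]
  simp
  nlinarith


/-- For `F_i, F_j ∈ ℝ^{m×2}` with `F_iᵀ F_j = [[a,b],[c,d]]`, the infimum over
rotations `Q ∈ SO(2)` of `‖F_j Q − F_i‖_F²` equals
`tr(F_i F_iᵀ) + tr(F_j F_jᵀ) − 2√((a+d)² + (c−b)²)`, and it is attained. -/
theorem stmt0 (m : ℕ) (hm : 1 ≤ m) (Fi Fj : Matrix (Fin m) (Fin 2) ℝ)
    (a b c d : ℝ)
    (ha : a = (Fiᵀ * Fj) 0 0) (hb : b = (Fiᵀ * Fj) 0 1)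
    (hc : c = (Fiᵀ * Fj) 1 0) (hd : d = (Fiᵀ * Fj) 1 1) :
    IsLeast
      {x : ℝ | ∃ Q : Matrix (Fin 2) (Fin 2) ℝ,
        Qᵀ * Q = 1 ∧ Q.det = 1 ∧ x = (frobNorm (Fj * Q - Fi)) ^ 2}
      (Matrix.trace (Fi * Fiᵀ) + Matrix.trace (Fj * Fjᵀ)
        - 2 * Real.sqrt ((a + d) ^ 2 + (c - b) ^ 2)) := by
  set r : ℝ := Real.sqrt ((a + d) ^ 2 + (c - b) ^ 2) with hr
  have hrnn : 0 ≤ r := Real.sqrt_nonneg _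
  have hr2 : r ^ 2 = (a + d) ^ 2 + (c - b) ^ 2 := Real.sq_sqrt (by positivity)
  have value : ∀ Q : Matrix (Fin 2) (Fin 2) ℝ, Qᵀ * Q = 1 → Q.det = 1 →
      (frobNorm (Fj * Q - Fi)) ^ 2
        = Matrix.trace (Fi * Fiᵀ) + Matrix.trace (Fj * Fjᵀ)
          - 2 * ((a + d) * Q 0 0 + (b - c) * Q 1 0) := by
    intro Q hQ hdet
    obtain ⟨h11, h01, hunit⟩ := so2_entries Q hQ hdet
    have hfn : (frobNorm (Fj * Q - Fi)) ^ 2 = Matrix.trace ((Fj * Q - Fi)ᵀ * (Fj * Q - Fi)) :=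
      Real.sq_sqrt (trace_transpose_mul_self_nonneg' _)
    rw [hfn, expand_trace Fi Fj Q hQ]
    congr 1
    have h : Matrix.trace (Fiᵀ * Fj * Q) = (a + d) * Q 0 0 + (b - c) * Q 1 0 := by
      rw [ha, hb, hc, hd]
      simp [Matrix.trace, Fin.sum_univ_two, Matrix.mul_apply, h11, h01]
      ring
    rw [h]
  constructor
  · by_cases h0 : r = 0
    · refine ⟨1, by simp, by simp, ?_⟩
      have hsum : (a + d) ^ 2 + (c - b) ^ 2 = 0 := by rw [← hr2, h0]; ring
      have had : a + d = 0 := by nlinarith [sq_nonneg (a + d), sq_nonneg (c - b)]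
      rw [value 1 (by simp) (by simp)]
      simp [Matrix.one_apply, had, h0]
    · set p : ℝ := (a + d) / r with hp
      set q : ℝ := (b - c) / r with hq
      have hr0 : (0:ℝ) < r := lt_of_le_of_ne hrnn (Ne.symm h0)
      have hpq : p ^ 2 + q ^ 2 = 1 := by
        rw [hp, hq, div_pow, div_pow, ← add_div, div_eq_one_iff_eq (by positivity)]
        rw [hr2]; ring
      refine ⟨!![p, -q; q, p], rot_orth p q hpq, rot_det p q hpq, ?_⟩
      rw [value _ (rot_orth p q hpq) (rot_det p q hpq)]
      have hent : (a + d) * (!![p, -q; q, p] : Matrix (Fin 2) (Fin 2) ℝ) 0 0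
          + (b - c) * (!![p, -q; q, p] : Matrix (Fin 2) (Fin 2) ℝ) 1 0 = r := by
        have e1 : (!![p, -q; q, p] : Matrix (Fin 2) (Fin 2) ℝ) 0 0 = p := rfl
        have e2 : (!![p, -q; q, p] : Matrix (Fin 2) (Fin 2) ℝ) 1 0 = q := rfl
        rw [e1, e2, hp, hq]
        field_simp
        nlinarith [hr2]
      rw [hent]
  · rintro x ⟨Q, hQ, hdet, rfl⟩
    rw [value Q hQ hdet]
    obtain ⟨h11, h01, hunit⟩ := so2_entries Q hQ hdet
    have key : (a + d) * Q 0 0 + (b - c) * Q 1 0 ≤ r := by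
      have h1 : ((a + d) * Q 0 0 + (b - c) * Q 1 0) ^ 2 ≤ r ^ 2 := by
        rw [hr2]
        nlinarith [sq_nonneg ((a + d) * Q 1 0 - (b - c) * Q 0 0), hunit]
      nlinarith
    linarith
end

section
/- Let m ≥ 1 and let F_i, F_j ∈ ℝ^{m×2}. Write F_iᵀF_j = [[a, b], [c, d]]. Then tr(F_i F_iᵀ) + tr(F_j F_jᵀ) ≥ 2·√((a + d)² + (c − b)²); in particular the quantity d(G_i, G_j) = tr(G_i) + tr(G_j) − 2·√((a + d)² + (c − b)²), with G_i = F_i F_iᵀ and G_j = F_j F_jᵀ, is nonnegative. -/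
open Matrix

/-- With `F_iᵀF_j = [[a,b],[c,d]]`,
`tr(F_i F_iᵀ) + tr(F_j F_jᵀ) ≥ 2√((a+d)² + (c−b)²)`; in particular the
Gram-matrix distance `tr(G_i) + tr(G_j) − 2√((a+d)² + (c−b)²)` is nonnegative. -/
theorem stmt6 (m : ℕ) (hm : 1 ≤ m) (Fi Fj : Matrix (Fin m) (Fin 2) ℝ)
    (a b c d : ℝ)
    (ha : a = (Fiᵀ * Fj) 0 0) (hb : b = (Fiᵀ * Fj) 0 1)
    (hc : c = (Fiᵀ * Fj) 1 0) (hd : d = (Fiᵀ * Fj) 1 1) :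
    2 * Real.sqrt ((a + d) ^ 2 + (c - b) ^ 2)
        ≤ Matrix.trace (Fi * Fiᵀ) + Matrix.trace (Fj * Fjᵀ) ∧
    0 ≤ Matrix.trace (Fi * Fiᵀ) + Matrix.trace (Fj * Fjᵀ)
        - 2 * Real.sqrt ((a + d) ^ 2 + (c - b) ^ 2) := by
  have key : 2 * Real.sqrt ((a + d) ^ 2 + (c - b) ^ 2)
      ≤ Matrix.trace (Fi * Fiᵀ) + Matrix.trace (Fj * Fjᵀ) := by
    set f : Fin m → ℂ := fun k =>
      (starRingEnd ℂ ⟨Fi k 0, Fi k 1⟩) * ⟨Fj k 0, Fj k 1⟩ with hf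
    set S : ℂ := ∑ k, f k with hS
    have hre : S.re = a + d := by
      rw [ha, hd]
      simp [hS, hf, Complex.mul_re, Matrix.mul_apply, Matrix.transpose_apply,
        Finset.sum_add_distrib]
    have him : S.im = -(c - b) := by
      rw [hc, hb]
      simp [hS, hf, Complex.mul_im, Matrix.mul_apply, Matrix.transpose_apply,
        Finset.sum_sub_distrib]
      rw [← Finset.sum_sub_distrib]
      ring_nf
    have habs : ‖S‖ = Real.sqrt ((a + d) ^ 2 + (c - b) ^ 2) := by
      rw [Complex.norm_def, Complex.normSq_apply, hre, him]
      ring_nf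
    have htri : ‖S‖ ≤ ∑ k, ‖f k‖ :=
      norm_sum_le _ _
    have hfk : ∀ k, ‖f k‖ =
        Real.sqrt (Fi k 0 ^ 2 + Fi k 1 ^ 2) * Real.sqrt (Fj k 0 ^ 2 + Fj k 1 ^ 2) := by
      intro k
      simp [hf, _root_.map_mul, Complex.norm_def, Complex.normSq_apply]
      ring_nf
    have hamgm : ∀ k, 2 * ‖f k‖ ≤
        (Fi k 0 ^ 2 + Fi k 1 ^ 2) + (Fj k 0 ^ 2 + Fj k 1 ^ 2) := by
      intro k
      rw [hfk k]
      have h1 : Real.sqrt (Fi k 0 ^ 2 + Fi k 1 ^ 2) ^ 2 = Fi k 0 ^ 2 + Fi k 1 ^ 2 :=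
        Real.sq_sqrt (by positivity)
      have h2 : Real.sqrt (Fj k 0 ^ 2 + Fj k 1 ^ 2) ^ 2 = Fj k 0 ^ 2 + Fj k 1 ^ 2 :=
        Real.sq_sqrt (by positivity)
      nlinarith [sq_nonneg (Real.sqrt (Fi k 0 ^ 2 + Fi k 1 ^ 2) -
        Real.sqrt (Fj k 0 ^ 2 + Fj k 1 ^ 2))]
    have htr1 : Matrix.trace (Fi * Fiᵀ) = ∑ k, (Fi k 0 ^ 2 + Fi k 1 ^ 2) := by
      simp [Matrix.trace, Matrix.mul_apply, Matrix.diag, Fin.sum_univ_two, sq]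
    have htr2 : Matrix.trace (Fj * Fjᵀ) = ∑ k, (Fj k 0 ^ 2 + Fj k 1 ^ 2) := by
      simp [Matrix.trace, Matrix.mul_apply, Matrix.diag, Fin.sum_univ_two, sq]
    calc 2 * Real.sqrt ((a + d) ^ 2 + (c - b) ^ 2) = 2 * ‖S‖ := by rw [habs]
      _ ≤ 2 * ∑ k, ‖f k‖ := by linarith
      _ = ∑ k, 2 * ‖f k‖ := by rw [Finset.mul_sum]
      _ ≤ ∑ k, ((Fi k 0 ^ 2 + Fi k 1 ^ 2) + (Fj k 0 ^ 2 + Fj k 1 ^ 2)) :=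
          Finset.sum_le_sum fun k _ => hamgm k
      _ = Matrix.trace (Fi * Fiᵀ) + Matrix.trace (Fj * Fjᵀ) := by
          rw [htr1, htr2, Finset.sum_add_distrib]
  exact ⟨key, by linarith⟩
end

section
/- Let m ≥ 1, let F_i, F_j ∈ ℝ^{m×2}, and set G_i = F_i F_iᵀ and G_j = F_j F_jᵀ (both m×m real positive semi-definite). Then tr( ( G_i^{1/2} G_j G_i^{1/2} )^{1/2} ) = √(‖F_iᵀF_j‖_F² + 2·|det(F_iᵀF_j)|), i.e., it equals the sum of the two singular values of F_iᵀF_j. Here M^{1/2} denotes the unique positive semi-definite square root of a positive semi-definite matrix M. -/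
open Matrix

open scoped ComplexOrder in
/-- The positive semidefinite square root of a positive semidefinite matrix
(definition of `Matrix.PosSemidef.sqrt` from the older Mathlib, removed since). -/
noncomputable def Matrix.PosSemidef.sqrt {n 𝕜 : Type*} [Fintype n] [RCLike 𝕜] [DecidableEq n]
    {A : Matrix n n 𝕜} (hA : A.PosSemidef) : Matrix n n 𝕜 :=
  hA.1.eigenvectorUnitary.1 * diagonal ((↑) ∘ (√·) ∘ hA.1.eigenvalues) *
  (star hA.1.eigenvectorUnitary : Matrix n n 𝕜)

open scoped MatrixOrder in
theorem Matrix.PosSemidef.sqrt_eq_cfc' {n : Type*} [Fintype n] [DecidableEq n]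
    {A : Matrix n n ℝ} (hA : A.PosSemidef) : hA.sqrt = CFC.sqrt A := by
  have h0 : (0 : Matrix n n ℝ) ≤ A := nonneg_iff_posSemidef.mpr hA
  rw [CFC.sqrt_eq_cfc, cfc_nnreal_eq_real _ A h0, hA.1.cfc_eq]
  simp only [IsHermitian.cfc, Matrix.PosSemidef.sqrt, Unitary.conjStarAlgAut_apply, Unitary.coe_star]
  congr 3
  funext i
  simp [Real.sqrt_eq_zero', hA.eigenvalues_nonneg i]

open scoped MatrixOrder in
theorem Matrix.PosSemidef.posSemidef_sqrt {n : Type*} [Fintype n] [DecidableEq n]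
    {A : Matrix n n ℝ} (hA : A.PosSemidef) : hA.sqrt.PosSemidef := by
  rw [hA.sqrt_eq_cfc']
  exact nonneg_iff_posSemidef.mp (CFC.sqrt_nonneg A)

open scoped MatrixOrder in
theorem Matrix.PosSemidef.sqrt_mul_self {n : Type*} [Fintype n] [DecidableEq n]
    {A : Matrix n n ℝ} (hA : A.PosSemidef) : hA.sqrt * hA.sqrt = A := by
  rw [hA.sqrt_eq_cfc']
  exact CFC.sqrt_mul_sqrt_self A (nonneg_iff_posSemidef.mpr hA)

open scoped MatrixOrder in
theorem Matrix.PosSemidef.eq_sqrt_of_sq_eq {n : Type*} [Fintype n] [DecidableEq n]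
    {A B : Matrix n n ℝ} (hB : B.PosSemidef) (hA : A.PosSemidef) (h : B ^ 2 = A) :
    B = hA.sqrt := by
  rw [hA.sqrt_eq_cfc', eq_comm, CFC.sqrt_eq_iff A B (nonneg_iff_posSemidef.mpr hA)
    (nonneg_iff_posSemidef.mpr hB), ← pow_two, h]

theorem Matrix.IsHermitian.star_mul_self_mul_eq_diagonal {n : Type*} [Fintype n] [DecidableEq n]
    {A : Matrix n n ℝ} (hA : A.IsHermitian) :
    (star (hA.eigenvectorUnitary : Matrix n n ℝ)) * A * (hA.eigenvectorUnitary : Matrix n n ℝ)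
      = diagonal hA.eigenvalues := by
  have h := hA.conjStarAlgAut_star_eigenvectorUnitary
  simpa using h

/-- For Gram matrices `G_i = F_i F_iᵀ` and `G_j = F_j F_jᵀ`,
`tr((G_i^{1/2} G_j G_i^{1/2})^{1/2}) = √(‖F_iᵀF_j‖_F² + 2|det(F_iᵀF_j)|)`,
the sum of the two singular values of `F_iᵀF_j`. Here `M^{1/2}` is the unique
positive semi-definite square root. -/
theorem stmt11 (m : ℕ) (hm : 1 ≤ m) (Fi Fj : Matrix (Fin m) (Fin 2) ℝ)
    (hGi : (Fi * Fiᵀ).PosSemidef)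
    (hMid : (hGi.sqrt * (Fj * Fjᵀ) * hGi.sqrt).PosSemidef) :
    Matrix.trace hMid.sqrt
      = Real.sqrt ((frobNorm (Fiᵀ * Fj)) ^ 2 + 2 * |(Fiᵀ * Fj).det|) := by
  classical
  set A : Matrix (Fin 2) (Fin 2) ℝ := Fiᵀ * Fj with hAdef
  set S : Matrix (Fin m) (Fin m) ℝ := hGi.sqrt with hSdef
  have hS : S.PosSemidef := hGi.posSemidef_sqrt
  have hSt : Sᵀ = S := by
    have h := hS.1
    rwa [Matrix.IsHermitian, conjTranspose_eq_transpose_of_trivial] at h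
  have hSS : S * S = Fi * Fiᵀ := hGi.sqrt_mul_self
  set B : Matrix (Fin m) (Fin 2) ℝ := S * Fj with hBdef
  set C : Matrix (Fin 2) (Fin 2) ℝ := Aᵀ * A with hCdef
  have hC : C.PosSemidef := by
    have h := posSemidef_conjTranspose_mul_self A
    rwa [conjTranspose_eq_transpose_of_trivial] at h
  have hBtB : Bᵀ * B = C := by
    rw [hBdef, hCdef, hAdef, transpose_mul, hSt, transpose_mul, transpose_transpose]
    rw [Matrix.mul_assoc, ← Matrix.mul_assoc S S Fj, hSS]
    simp [Matrix.mul_assoc]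
  set d : Fin 2 → ℝ := hC.1.eigenvalues with hddef
  have hdnn : ∀ k, 0 ≤ d k := hC.eigenvalues_nonneg
  set U : Matrix (Fin 2) (Fin 2) ℝ := (hC.1.eigenvectorUnitary : Matrix (Fin 2) (Fin 2) ℝ)
    with hUdef
  have hUt : star U = Uᵀ := by
    rw [star_eq_conjTranspose, conjTranspose_eq_transpose_of_trivial]
  have hdiag : Uᵀ * C * U = diagonal d := by
    have h := hC.1.star_mul_self_mul_eq_diagonal
    rw [hUt] at h
    convert h using 2
  have hUUt : U * Uᵀ = 1 := by
    rw [← hUt]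
    exact Unitary.mul_star_self_of_mem (hC.1.eigenvectorUnitary).2
  set V : Matrix (Fin m) (Fin 2) ℝ := B * U with hVdef
  have hVtV : Vᵀ * V = diagonal d := by
    rw [hVdef, transpose_mul]
    calc Uᵀ * Bᵀ * (B * U) = Uᵀ * (Bᵀ * B) * U := by simp [Matrix.mul_assoc]
    _ = diagonal d := by rw [hBtB, hdiag]
  set f : Fin 2 → ℝ := fun k => if d k = 0 then 0 else (Real.sqrt (d k))⁻¹ with hfdef
  have hfnn : ∀ k, 0 ≤ f k := by
    intro k; rw [hfdef]; dsimp only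
    split
    · exact le_refl 0
    · positivity
  set N : Matrix (Fin m) (Fin m) ℝ := V * diagonal f * Vᵀ with hNdef
  have hN : N.PosSemidef := by
    have hff : (fun k => Real.sqrt (f k) * Real.sqrt (f k)) = f :=
      funext fun k => Real.mul_self_sqrt (hfnn k)
    have hXX : (V * diagonal fun k => Real.sqrt (f k)) *
        (V * diagonal fun k => Real.sqrt (f k))ᴴ = N := by
      rw [conjTranspose_eq_transpose_of_trivial, transpose_mul, Matrix.mul_assoc,
        ← Matrix.mul_assoc (diagonal _) _ _, diagonal_transpose, diagonal_mul_diagonal]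
      rw [hff, hNdef]
      simp [hVdef, Matrix.mul_assoc]
    exact hXX ▸ posSemidef_self_mul_conjTranspose _
  have hVzero : ∀ k, d k = 0 → ∀ i, V i k = 0 := by
    intro k hk i
    have h1 : (Vᵀ * V) k k = 0 := by rw [hVtV]; simp [hk]
    rw [Matrix.mul_apply] at h1
    simp only [transpose_apply] at h1
    have h2 := (Finset.sum_eq_zero_iff_of_nonneg
      (fun j _ => mul_self_nonneg (V j k))).mp h1 i (Finset.mem_univ i)
    exact mul_self_eq_zero.mp h2
  have hVg : V * diagonal (fun k => f k * (d k * f k)) = V := by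
    ext i k
    rw [Matrix.mul_diagonal]
    by_cases hk : d k = 0
    · rw [hVzero k hk i]; ring
    · have : f k = (Real.sqrt (d k))⁻¹ := by rw [hfdef]; simp [hk]
      rw [this]
      have hsq : Real.sqrt (d k) * Real.sqrt (d k) = d k := Real.mul_self_sqrt (hdnn k)
      have hs0 : Real.sqrt (d k) ≠ 0 := by
        intro h0; rw [h0, mul_zero] at hsq; exact hk hsq.symm
      have h1 : (Real.sqrt (d k))⁻¹ * (d k * (Real.sqrt (d k))⁻¹) = 1 := by
        rw [mul_comm, mul_assoc, ← mul_inv, hsq, mul_inv_cancel₀ hk]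
      rw [h1, mul_one]
  have hNsq : N * N = B * Bᵀ := by
    have h1 : N * N = V * (diagonal f * ((Vᵀ * V) * diagonal f)) * Vᵀ := by
      rw [hNdef]; simp only [Matrix.mul_assoc]
    rw [h1, hVtV, diagonal_mul_diagonal, diagonal_mul_diagonal, hVg]
    rw [hVdef, transpose_mul, Matrix.mul_assoc, ← Matrix.mul_assoc U, hUUt]
    simp
  have hM : S * (Fj * Fjᵀ) * S = B * Bᵀ := by
    rw [hBdef, transpose_mul, hSt]
    simp [Matrix.mul_assoc]
  have hsqrt : hMid.sqrt = N := by
    refine (hN.eq_sqrt_of_sq_eq hMid ?_).symm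
    rw [pow_two, hNsq, hM]
  rw [hsqrt]
  have htr : Matrix.trace N = Real.sqrt (d 0) + Real.sqrt (d 1) := by
    rw [hNdef, Matrix.trace_mul_cycle, hVtV, diagonal_mul_diagonal, trace_diagonal,
      Fin.sum_univ_two]
    have key : ∀ k, d k * f k = Real.sqrt (d k) := by
      intro k
      by_cases hk : d k = 0
      · simp [hfdef, hk]
      · have : f k = (Real.sqrt (d k))⁻¹ := by rw [hfdef]; simp [hk]
        rw [this, ← div_eq_mul_inv, Real.div_sqrt]
    rw [key 0, key 1]
  rw [htr]
  have htrC : Matrix.trace C = d 0 + d 1 := by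
    conv_lhs => rw [hC.1.spectral_theorem, Unitary.conjStarAlgAut_apply]
    rw [Matrix.trace_mul_cycle, hUt]
    rw [show Uᵀ * U = 1 from by
      rw [← hUt]; exact Unitary.star_mul_self_of_mem (hC.1.eigenvectorUnitary).2]
    rw [Matrix.one_mul, trace_diagonal, Fin.sum_univ_two]
    simp
    rfl
  have hdetC : C.det = d 0 * d 1 := by
    have h := hC.1.det_eq_prod_eigenvalues
    rw [Fin.prod_univ_two] at h
    simpa using h
  have hfn : frobNorm A ^ 2 = d 0 + d 1 := by
    rw [frobNorm, ← hCdef, Real.sq_sqrt (by rw [htrC]; have := hdnn 0; have := hdnn 1; linarith)]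
    exact htrC
  have hdet : |A.det| = Real.sqrt (d 0 * d 1) := by
    rw [← hdetC, hCdef, det_mul, det_transpose, ← pow_two, Real.sqrt_sq_eq_abs]
  rw [hfn, hdet]
  rw [show d 0 + d 1 + 2 * Real.sqrt (d 0 * d 1) = (Real.sqrt (d 0) + Real.sqrt (d 1)) ^ 2 from by
    rw [Real.sqrt_mul (hdnn 0)]
    nlinarith [Real.sq_sqrt (hdnn 0), Real.sq_sqrt (hdnn 1), Real.sqrt_nonneg (d 0),
      Real.sqrt_nonneg (d 1)]]
  rw [Real.sqrt_sq (by positivity)]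
end

section
/- Let A be a 2×2 real matrix with det A ≥ 0. Then the supremum over rotation matrices Q ∈ SO(2) of tr(A Q) equals the supremum over all orthogonal matrices Q ∈ O(2) of tr(A Q); that is, when det A ≥ 0 the optimal orthogonal alignment can be taken to be a rotation. -/
open Matrix

/-- If `det A ≥ 0`, the supremum of `tr(A Q)` over rotations `Q ∈ SO(2)` equals
the supremum over all orthogonal matrices `Q ∈ O(2)`. -/
theorem stmt13 (A : Matrix (Fin 2) (Fin 2) ℝ) (hdet : 0 ≤ A.det) :
    sSup {x : ℝ | ∃ Q : Matrix (Fin 2) (Fin 2) ℝ,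
        Qᵀ * Q = 1 ∧ Q.det = 1 ∧ x = Matrix.trace (A * Q)}
      = sSup {x : ℝ | ∃ Q : Matrix (Fin 2) (Fin 2) ℝ,
        Qᵀ * Q = 1 ∧ x = Matrix.trace (A * Q)} := by
  set p : ℝ := A 0 0 + A 1 1 with hp
  set q : ℝ := A 0 1 - A 1 0 with hq
  set M : ℝ := Real.sqrt (p^2 + q^2) with hM
  clear_value p q M
  have hM0 : 0 ≤ M := by rw [hM]; exact Real.sqrt_nonneg _
  have hM2 : M^2 = p^2 + q^2 := by rw [hM]; exact Real.sq_sqrt (by positivity)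
  have hdetA : 0 ≤ A 0 0 * A 1 1 - A 0 1 * A 1 0 := by
    rw [Matrix.det_fin_two] at hdet; linarith
  -- every orthogonal Q has trace (A*Q) ≤ M
  have key : ∀ Q : Matrix (Fin 2) (Fin 2) ℝ, Qᵀ * Q = 1 →
      Matrix.trace (A * Q) ≤ M := by
    intro Q hQ
    have h00 := congrFun (congrFun hQ 0) 0
    have h01 := congrFun (congrFun hQ 0) 1
    have h11 := congrFun (congrFun hQ 1) 1
    simp [Matrix.mul_apply, Fin.sum_univ_two, Matrix.one_apply,
      Matrix.transpose_apply] at h00 h01 h11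
    set a : ℝ := Q 0 0 with ha
    set b : ℝ := Q 0 1 with hb
    set c : ℝ := Q 1 0 with hc
    set d : ℝ := Q 1 1 with hd
    clear_value a b c d
    have htr : Matrix.trace (A * Q)
        = A 0 0 * a + A 0 1 * c + A 1 0 * b + A 1 1 * d := by
      simp [Matrix.trace, Matrix.mul_apply, Fin.sum_univ_two, Matrix.diag]
      rw [ha, hb, hc, hd]
      ring
    rw [htr]
    have he : (a*d - b*c - 1) * (a*d - b*c + 1) = 0 := by
      linear_combination (b*b + d*d) * h00 + h11 - (a*b + c*d) * h01
    rcases mul_eq_zero.1 he with he1 | he2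
    · -- rotation: d = a, b = -c
      have hsum : (d - a)^2 + (b + c)^2 = 0 := by linear_combination h00 + h11 - 2*he1
      have hda : d = a := by
        have h1 : (d - a)^2 = 0 := by
          linarith [sq_nonneg (b + c), sq_nonneg (d - a)]
        have := sq_eq_zero_iff.1 h1
        linarith
      have hbc : b = -c := by
        have h1 : (b + c)^2 = 0 := by
          linarith [sq_nonneg (b + c), sq_nonneg (d - a)]
        have := sq_eq_zero_iff.1 h1
        linarith
      rw [hda, hbc]
      have hTeq : A 0 0 * a + A 0 1 * c + A 1 0 * (-c) + A 1 1 * a = p*a + q*c := by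
        rw [hp, hq]; ring
      rw [hTeq]
      have hid : (p*a + q*c)^2 + (p*c - q*a)^2 = p^2 + q^2 := by
        linear_combination (p^2 + q^2) * h00
      calc p*a + q*c ≤ |p*a + q*c| := le_abs_self _
        _ = Real.sqrt ((p*a + q*c)^2) := (Real.sqrt_sq_eq_abs _).symm
        _ ≤ M := by
            rw [hM]
            exact Real.sqrt_le_sqrt (by linarith [hid, sq_nonneg (p*c - q*a)])
    · -- reflection: d = -a, b = c
      have hsum : (d + a)^2 + (b - c)^2 = 0 := by linear_combination h00 + h11 + 2*he2
      have hda : d = -a := by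
        have h1 : (d + a)^2 = 0 := by
          linarith [sq_nonneg (b - c), sq_nonneg (d + a)]
        have := sq_eq_zero_iff.1 h1
        linarith
      have hbc : b = c := by
        have h1 : (b - c)^2 = 0 := by
          linarith [sq_nonneg (b - c), sq_nonneg (d + a)]
        have := sq_eq_zero_iff.1 h1
        linarith
      rw [hda, hbc]
      have hTeq : A 0 0 * a + A 0 1 * c + A 1 0 * c + A 1 1 * (-a)
          = (A 0 0 - A 1 1)*a + (A 0 1 + A 1 0)*c := by ring
      rw [hTeq]
      set u : ℝ := A 0 0 - A 1 1 with hu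
      set v : ℝ := A 0 1 + A 1 0 with hv
      clear_value u v
      have hid : (u*a + v*c)^2 + (u*c - v*a)^2 = u^2 + v^2 := by
        linear_combination (u^2 + v^2) * h00
      have huv : u^2 + v^2 ≤ p^2 + q^2 := by
        have h4 : u^2 + v^2 = p^2 + q^2 - 4*(A 0 0 * A 1 1 - A 0 1 * A 1 0) := by
          rw [hu, hv, hp, hq]; ring
        linarith [hdetA, h4]
      calc u*a + v*c ≤ |u*a + v*c| := le_abs_self _
        _ = Real.sqrt ((u*a + v*c)^2) := (Real.sqrt_sq_eq_abs _).symm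
        _ ≤ M := by
            rw [hM]
            exact Real.sqrt_le_sqrt (by linarith [hid, huv, sq_nonneg (u*c - v*a)])
  -- M is attained by a rotation
  have hmem : ∃ Q : Matrix (Fin 2) (Fin 2) ℝ,
      Qᵀ * Q = 1 ∧ Q.det = 1 ∧ M = Matrix.trace (A * Q) := by
    by_cases hMz : M = 0
    · have hpq : p = 0 ∧ q = 0 := by
        constructor <;> nlinarith [sq_nonneg p, sq_nonneg q, hM2]
      refine ⟨1, by simp, by simp, ?_⟩
      simp [Matrix.trace, Matrix.mul_apply, Fin.sum_univ_two, Matrix.diag,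
        Matrix.one_apply, hMz]
      linarith [hpq.1]
    · have hMpos : 0 < M := lt_of_le_of_ne hM0 (Ne.symm hMz)
      have hMne : M ≠ 0 := ne_of_gt hMpos
      set Q : Matrix (Fin 2) (Fin 2) ℝ := !![p/M, -(q/M); q/M, p/M] with hQdef
      have hQT : Qᵀ = !![p/M, q/M; -(q/M), p/M] := by
        rw [hQdef]; ext i j; fin_cases i <;> fin_cases j <;> rfl
      refine ⟨Q, ?_, ?_, ?_⟩
      · rw [hQT, hQdef]
        ext i j
        fin_cases i <;> fin_cases j <;>
          simp [Matrix.mul_apply, Fin.sum_univ_two, Matrix.one_apply] <;>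
          field_simp <;>
          first
            | ring1
            | linear_combination hM2
            | linear_combination -hM2
      · rw [hQdef, Matrix.det_fin_two_of]
        field_simp
        first
          | linear_combination hM2
          | linear_combination -hM2
      · have ht : Matrix.trace (A * Q)
            = A 0 0 * (p/M) + A 0 1 * (q/M) + A 1 0 * (-(q/M)) + A 1 1 * (p/M) := by
          rw [hQdef]
          simp [Matrix.trace, Matrix.mul_apply, Fin.sum_univ_two, Matrix.diag]
          ring
        rw [ht]
        field_simp
        linear_combination hM2 + p*hp + q*hq
  obtain ⟨Q₀, hQ₀o, hQ₀d, hQ₀t⟩ := hmem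
  have hSO : sSup {x : ℝ | ∃ Q : Matrix (Fin 2) (Fin 2) ℝ,
      Qᵀ * Q = 1 ∧ Q.det = 1 ∧ x = Matrix.trace (A * Q)} = M := by
    apply le_antisymm
    · refine csSup_le ⟨M, Q₀, hQ₀o, hQ₀d, hQ₀t⟩ ?_
      rintro x ⟨Q, hQ, -, rfl⟩
      exact key Q hQ
    · refine le_csSup ⟨M, ?_⟩ ⟨Q₀, hQ₀o, hQ₀d, hQ₀t⟩
      rintro x ⟨Q, hQ, -, rfl⟩
      exact key Q hQ
  have hO : sSup {x : ℝ | ∃ Q : Matrix (Fin 2) (Fin 2) ℝ,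
      Qᵀ * Q = 1 ∧ x = Matrix.trace (A * Q)} = M := by
    apply le_antisymm
    · refine csSup_le ⟨M, Q₀, hQ₀o, hQ₀t⟩ ?_
      rintro x ⟨Q, hQ, rfl⟩
      exact key Q hQ
    · refine le_csSup ⟨M, ?_⟩ ⟨Q₀, hQ₀o, hQ₀t⟩
      rintro x ⟨Q, hQ, rfl⟩
      exact key Q hQ
  rw [hSO, hO]
end
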